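/- Let (V, σ, F) satisfy properties P1–P4, and let E be a set of arcs from negative to positive vertices. Then the subfamily F' of sets in F not covered by any arc of E again satisfies properties P1–P4 (in particular F' is a crossing family). -/
import Mathlib


/-- The subfamily of sets of `F` not covered by any arc of `E`
(an arc `(m, p)` covers `U` if `m ∉ U` and `p ∈ U`). -/
def uncoveredFam {V : Type*} (F : Set (Set V)) (E : Set (V × V)) : Set (Set V) :=
  {U ∈ F | ∀ e ∈ E, ¬ (e.1 ∉ U ∧ e.2 ∈ U)}

/-- Let `(V, σ, F)` satisfy P1–P4 and let `E` be a set of arcs from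
negative to positive vertices. Then the subfamily `F'` of sets in `F` not covered by any
arc of `E` again satisfies P1–P4; in particular `F'` is a crossing family.
(`true` = `+`, `false` = `−`.) -/
theorem stmt_6 {V : Type*} [Fintype V] (F : Set (Set V)) (σ : V → Bool)
    (hF : ∀ U ∈ F, U ≠ ∅ ∧ U ≠ Set.univ)
    (hP1 : ∀ U ∈ F, ∀ W ∈ F, (U ∩ W).Nonempty → U ∪ W ≠ Set.univ →
      U ∩ W ∈ F ∧ U ∪ W ∈ F)
    (hP2 : ∀ U ∈ F, (∃ u ∈ U, σ u = true) ∧ (∃ v ∉ U, σ v = false))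
    (hP3 : ∀ U ∈ F, ∀ W ∈ F, U ∩ W = ∅ → ∃ v ∉ U ∪ W, σ v = false)
    (hP4 : ∀ U ∈ F, ∀ W ∈ F, U ∪ W = Set.univ → ∃ u ∈ U ∩ W, σ u = true)
    (E : Set (V × V)) (hE : ∀ e ∈ E, σ e.1 = false ∧ σ e.2 = true) :
    (∀ U ∈ uncoveredFam F E, ∀ W ∈ uncoveredFam F E,
        (U ∩ W).Nonempty → U ∪ W ≠ Set.univ →
        U ∩ W ∈ uncoveredFam F E ∧ U ∪ W ∈ uncoveredFam F E) ∧
    (∀ U ∈ uncoveredFam F E, (∃ u ∈ U, σ u = true) ∧ (∃ v ∉ U, σ v = false)) ∧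
    (∀ U ∈ uncoveredFam F E, ∀ W ∈ uncoveredFam F E, U ∩ W = ∅ →
        ∃ v ∉ U ∪ W, σ v = false) ∧
    (∀ U ∈ uncoveredFam F E, ∀ W ∈ uncoveredFam F E, U ∪ W = Set.univ →
        ∃ u ∈ U ∩ W, σ u = true) := by
  refine ⟨?_, ?_, ?_, ?_⟩
  · rintro U ⟨hUF, hU⟩ W ⟨hWF, hW⟩ hne hun
    obtain ⟨hIF, hUF'⟩ := hP1 U hUF W hWF hne hun
    refine ⟨⟨hIF, ?_⟩, ⟨hUF', ?_⟩⟩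
    · rintro e he ⟨hm, hp⟩
      rcases (not_and_or.mp (by simpa using hm)) with h | h
      · exact hU e he ⟨h, hp.1⟩
      · exact hW e he ⟨h, hp.2⟩
    · rintro e he ⟨hm, hp⟩
      rcases hp with hp | hp
      · exact hU e he ⟨fun h => hm (Or.inl h), hp⟩
      · exact hW e he ⟨fun h => hm (Or.inr h), hp⟩
  · rintro U ⟨hUF, _⟩; exact hP2 U hUF
  · rintro U ⟨hUF, _⟩ W ⟨hWF, _⟩ h; exact hP3 U hUF W hWF h
  · rintro U ⟨hUF, _⟩ W ⟨hWF, _⟩ h; exact hP4 U hUF W hWF h
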